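/- There exists a finite constant C such that for every λ > 0, ∫₀² λ/( sin²(2πs) + (λ + sin²(πs))² ) ds ≤ C. -/

import Mathlib

open MeasureTheory Real

private lemma sin_sq_ge (n : ℤ) (s : ℝ) (h : |s - (n : ℝ)/2| ≤ 1/4) :
    16 * (s - (n : ℝ)/2) ^ 2 ≤ Real.sin (2 * π * s) ^ 2 := by
  set u : ℝ := s - (n : ℝ)/2 with hu
  have hs : s = u + (n : ℝ)/2 := by ring
  have h1 : Real.sin (2 * π * s) ^ 2 = Real.sin (2 * π * u) ^ 2 := by
    rw [hs]
    have : 2 * π * (u + (n : ℝ)/2) = 2 * π * u + (n : ℝ) * π := by ring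
    rw [this, Real.sin_add_int_mul_pi, mul_pow]
    have h0 : ((-1:ℝ) ^ n) ^ 2 = 1 := by
      rw [← zpow_natCast ((-1:ℝ) ^ n) 2, ← zpow_mul, mul_comm, zpow_mul]
      norm_num
    rw [h0, one_mul]
  rw [h1]
  have habs : |2 * π * u| ≤ π / 2 := by
    rw [abs_mul, abs_of_pos (by positivity : (0:ℝ) < 2 * π)]
    have := abs_nonneg u
    nlinarith [Real.pi_pos, h]
  have hjordan : 2 / π * |2 * π * u| ≤ Real.sin |2 * π * u| :=
    Real.mul_le_sin (abs_nonneg _) habs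
  have heq : 2 / π * |2 * π * u| = 4 * |u| := by
    rw [abs_mul, abs_of_pos (by positivity : (0:ℝ) < 2 * π)]
    field_simp
    ring
  have hsin_abs : Real.sin |2 * π * u| ^ 2 = Real.sin (2 * π * u) ^ 2 := by
    rcases abs_choice (2 * π * u) with h' | h'
    · rw [h']
    · rw [h', Real.sin_neg, neg_sq]
  have h4 : 4 * |u| ≤ Real.sin |2 * π * u| := heq ▸ hjordan
  have : (4 * |u|) ^ 2 ≤ Real.sin |2 * π * u| ^ 2 := by
    apply pow_le_pow_left₀ (by positivity) h4
  rw [hsin_abs] at this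
  calc 16 * u ^ 2 = (4 * |u|) ^ 2 := by rw [mul_pow, sq_abs]; ring
    _ ≤ _ := this

private lemma arctan_integral (lam z a b : ℝ) (hl : 0 < lam) :
    ∫ s in a..b, lam / (16 * (s - z) ^ 2 + lam ^ 2) ≤ π / 4 := by
  have hderiv : ∀ s ∈ Set.uIcc a b,
      HasDerivAt (fun s => (1/4) * Real.arctan (4 * (s - z) / lam))
        (lam / (16 * (s - z) ^ 2 + lam ^ 2)) s := by
    intro s _
    have h1 : HasDerivAt (fun s : ℝ => 4 * (s - z) / lam) (4 / lam) s := by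
      have : HasDerivAt (fun s : ℝ => 4 * (s - z) / lam) (4 * 1 / lam) s := by
        exact (((hasDerivAt_id s).sub_const z).const_mul 4).div_const lam
      simpa using this
    have h2 := (Real.hasDerivAt_arctan (4 * (s - z) / lam)).comp s h1
    have h3 := h2.const_mul (1/4 : ℝ)
    refine h3.congr_deriv ?_
    have hd : 16 * (s - z) ^ 2 + lam ^ 2 > 0 := by positivity
    field_simp
    ring
  have hint : IntervalIntegrable (fun s => lam / (16 * (s - z) ^ 2 + lam ^ 2))
      MeasureTheory.volume a b := by
    apply Continuous.intervalIntegrable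
    apply Continuous.div continuous_const
    · continuity
    · intro s; positivity
  rw [intervalIntegral.integral_eq_sub_of_hasDerivAt hderiv hint]
  have hb := Real.arctan_lt_pi_div_two (4 * (b - z) / lam)
  have ha := Real.neg_pi_div_two_lt_arctan (4 * (a - z) / lam)
  linarith

private lemma f_cont (lam : ℝ) (hl : 0 < lam) :
    Continuous (fun s : ℝ => lam / (Real.sin (2 * π * s) ^ 2 + (lam + Real.sin (π * s) ^ 2) ^ 2)) := by
  apply Continuous.div continuous_const
  · continuity
  · intro s
    nlinarith [sq_nonneg (Real.sin (2 * π * s)), sq_nonneg (Real.sin (π * s)),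
      sq_nonneg (lam + Real.sin (π * s) ^ 2), sq_nonneg (Real.sin (π * s) ^ 2)]

private lemma piece (lam : ℝ) (hl : 0 < lam) (n : ℤ) (a b : ℝ) (hab : a ≤ b)
    (hnear : ∀ s ∈ Set.Icc a b, |s - (n : ℝ)/2| ≤ 1/4) :
    ∫ s in a..b, lam / (Real.sin (2 * π * s) ^ 2 + (lam + Real.sin (π * s) ^ 2) ^ 2) ≤ π / 4 := by
  have hmono : ∫ s in a..b, lam / (Real.sin (2 * π * s) ^ 2 + (lam + Real.sin (π * s) ^ 2) ^ 2)
      ≤ ∫ s in a..b, lam / (16 * (s - (n : ℝ)/2) ^ 2 + lam ^ 2) := by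
    apply intervalIntegral.integral_mono_on hab
    · exact ((f_cont lam hl).intervalIntegrable a b)
    · apply Continuous.intervalIntegrable
      apply Continuous.div continuous_const
      · continuity
      · intro s; positivity
    · intro s hs
      have hkey := sin_sq_ge n s (hnear s hs)
      have hb2 : lam ^ 2 ≤ (lam + Real.sin (π * s) ^ 2) ^ 2 := by
        nlinarith [sq_nonneg (Real.sin (π * s)), sq_nonneg (Real.sin (π * s) ^ 2)]
      apply div_le_div_of_nonneg_left hl.le (by positivity)
      linarith
  exact hmono.trans (arctan_integral lam ((n : ℝ)/2) a b hl)

theorem stmt_12 :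
    ∃ C : ℝ, ∀ lam : ℝ, 0 < lam →
      ∫ s in Set.Icc (0 : ℝ) 2,
          lam / (Real.sin (2 * π * s) ^ 2 + (lam + Real.sin (π * s) ^ 2) ^ 2) ≤ C := by
  refine ⟨2 * π, fun lam hl => ?_⟩
  set f : ℝ → ℝ :=
    fun s => lam / (Real.sin (2 * π * s) ^ 2 + (lam + Real.sin (π * s) ^ 2) ^ 2) with hf
  have hcont := f_cont lam hl
  have hIcc : ∫ s in Set.Icc (0 : ℝ) 2, f s = ∫ s in (0:ℝ)..2, f s := by
    rw [MeasureTheory.integral_Icc_eq_integral_Ioc,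
      intervalIntegral.integral_of_le (by norm_num : (0:ℝ) ≤ 2)]
  rw [hIcc]
  have hint : ∀ a b : ℝ, IntervalIntegrable f MeasureTheory.volume a b :=
    fun a b => hcont.intervalIntegrable a b
  have hsplit : ∀ a b c : ℝ, (∫ s in a..b, f s) + (∫ s in b..c, f s) = ∫ s in a..c, f s :=
    fun a b c => intervalIntegral.integral_add_adjacent_intervals (hint a b) (hint b c)
  have e1 : ∫ s in (0:ℝ)..2, f s =
      (∫ s in (0:ℝ)..(1/4), f s) + (∫ s in (1/4:ℝ)..(1/2), f s) + (∫ s in (1/2:ℝ)..(3/4), f s)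
      + (∫ s in (3/4:ℝ)..1, f s) + (∫ s in (1:ℝ)..(5/4), f s) + (∫ s in (5/4:ℝ)..(3/2), f s)
      + (∫ s in (3/2:ℝ)..(7/4), f s) + (∫ s in (7/4:ℝ)..2, f s) := by
    rw [hsplit 0 (1/4) (1/2), hsplit 0 (1/2) (3/4), hsplit 0 (3/4) 1, hsplit 0 1 (5/4),
      hsplit 0 (5/4) (3/2), hsplit 0 (3/2) (7/4), hsplit 0 (7/4) 2]
  rw [e1]
  have p1 := piece lam hl 0 0 (1/4) (by norm_num)
    (fun s hs => by rw [Set.mem_Icc] at hs; rw [abs_le]; push_cast; constructor <;> linarith [hs.1, hs.2])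
  have p2 := piece lam hl 1 (1/4) (1/2) (by norm_num)
    (fun s hs => by rw [Set.mem_Icc] at hs; rw [abs_le]; push_cast; constructor <;> linarith [hs.1, hs.2])
  have p3 := piece lam hl 1 (1/2) (3/4) (by norm_num)
    (fun s hs => by rw [Set.mem_Icc] at hs; rw [abs_le]; push_cast; constructor <;> linarith [hs.1, hs.2])
  have p4 := piece lam hl 2 (3/4) 1 (by norm_num)
    (fun s hs => by rw [Set.mem_Icc] at hs; rw [abs_le]; push_cast; constructor <;> linarith [hs.1, hs.2])
  have p5 := piece lam hl 2 1 (5/4) (by norm_num)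
    (fun s hs => by rw [Set.mem_Icc] at hs; rw [abs_le]; push_cast; constructor <;> linarith [hs.1, hs.2])
  have p6 := piece lam hl 3 (5/4) (3/2) (by norm_num)
    (fun s hs => by rw [Set.mem_Icc] at hs; rw [abs_le]; push_cast; constructor <;> linarith [hs.1, hs.2])
  have p7 := piece lam hl 3 (3/2) (7/4) (by norm_num)
    (fun s hs => by rw [Set.mem_Icc] at hs; rw [abs_le]; push_cast; constructor <;> linarith [hs.1, hs.2])
  have p8 := piece lam hl 4 (7/4) 2 (by norm_num)
    (fun s hs => by rw [Set.mem_Icc] at hs; rw [abs_le]; push_cast; constructor <;> linarith [hs.1, hs.2])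
  linarith
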